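/- Synchronous incremental voting on K_n, elimination of an extreme opinion: let s = min_v X_v(0) and ℓ = max_v X_v(0) and suppose ℓ ≥ s+3. Then for every t ≥ 0, E[N_s(t+1)·N_ℓ(t+1) | X(t)] ≤ (1/4)·N_s(t)·N_ℓ(t), and consequently, for T = ⌈3 log n⌉, P[N_s(T)·N_ℓ(T) > 0] ≤ 1/n; that is, with probability at least 1 − 1/n one of the two extreme opinions has disappeared within ⌈3 log n⌉ steps. -/

import Mathlib

/-!
STATEMENT 8: Synchronous incremental voting on `K_n`, elimination of an extreme
opinion.  Let `s = min_v X_v(0)` and `ℓ = max_v X_v(0)` with `ℓ ≥ s+3`.  Then for every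
`t ≥ 0`, `E[N_s(t+1)·N_ℓ(t+1) | X(t)] ≤ (1/4)·N_s(t)·N_ℓ(t)` and, for
`T = ⌈3 log n⌉`, `P[N_s(T)·N_ℓ(T) > 0] ≤ 1/n`; that is, with probability at least
`1 − 1/n` one of the two extreme opinions has disappeared within `⌈3 log n⌉` steps.

On `K_n` the synchronous process is: every vertex independently chooses a uniformly
random vertex `w` (among all `n`) and updates towards its opinion.  The one-step
conditional expectation bound is stated for every configuration `x` whose opinions lie
in `[s, ℓ]` (which holds for every state `X(t)` of the process, since the minimum
present opinion can only increase and the maximum only decrease).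
-/

open scoped ENNReal

namespace KnSync8

/-- The incremental voting update rule. -/
def updateRule (a b : ℤ) : ℤ := if a < b then a + 1 else if b < a then a - 1 else a

/-- Expected value of a real-valued function under a probability mass function. -/
noncomputable def expVal {α : Type*} (p : PMF α) (f : α → ℝ) : ℝ :=
  ∑' a, (p a).toReal * f a

/-- The probability of an event under a probability mass function, as a real number. -/
noncomputable def prob {α : Type*} (p : PMF α) (A : Set α) : ℝ :=
  (∑' a, A.indicator p a).toReal

/-- One step of synchronous incremental voting on `K_n`: every vertex `v` independently
chooses a uniformly random vertex `c v` and updates using its (old) opinion. -/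
noncomputable def step (n : ℕ) [NeZero n] (x : Fin n → ℤ) : PMF (Fin n → ℤ) :=
  (PMF.uniformOfFintype (Fin n → Fin n)).map fun c => fun v => updateRule (x v) (x (c v))

/-- The distribution of the configuration after `t` steps, started from `x0`. -/
noncomputable def dist (n : ℕ) [NeZero n] (x0 : Fin n → ℤ) : ℕ → PMF (Fin n → ℤ)
  | 0 => PMF.pure x0
  | t + 1 => (dist n x0 t).bind (step n)

/-- `count n i x` is `N_i`: the number of vertices holding opinion `i`. -/
def count (n : ℕ) (i : ℤ) (x : Fin n → ℤ) : ℕ :=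
  (Finset.univ.filter fun v => x v = i).card

lemma eE_map {α β : Type*} (p : PMF α) (g : α → β) (f : β → ℝ≥0∞) :
    ∑' b, p.map g b * f b = ∑' a, p a * f (g a) := by
  simp only [PMF.map_apply, ← ENNReal.tsum_mul_right]
  rw [ENNReal.tsum_comm]
  congr 1; ext a
  classical
  simp only [ite_mul, zero_mul]
  rw [tsum_eq_single (g a) (by intro b hb; simp [hb])]
  simp

lemma eE_bind {α β : Type*} (p : PMF α) (q : α → PMF β) (f : β → ℝ≥0∞) :
    ∑' b, (p.bind q) b * f b = ∑' a, p a * ∑' b, (q a) b * f b := by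
  simp only [PMF.bind_apply, ← ENNReal.tsum_mul_right]
  rw [ENNReal.tsum_comm]
  congr 1; ext a
  rw [← ENNReal.tsum_mul_left]
  congr 1; ext b; ring

lemma eE_pure {α : Type*} (a : α) (f : α → ℝ≥0∞) :
    ∑' b, (PMF.pure a) b * f b = f a := by
  classical
  simp only [PMF.pure_apply, ite_mul, one_mul, zero_mul]
  rw [tsum_eq_single a (by intro b hb; simp [hb])]
  simp

lemma update_eq_min {s ℓ a b : ℤ} (h3 : s + 3 ≤ ℓ) (ha : s ≤ a) (ha' : a ≤ ℓ)
    (hb : s ≤ b) (hb' : b ≤ ℓ) :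
    updateRule a b = s ↔ (a = s ∨ a = s + 1) ∧ b = s := by
  unfold updateRule; split_ifs <;> omega

lemma update_eq_max {s ℓ a b : ℤ} (h3 : s + 3 ≤ ℓ) (ha : s ≤ a) (ha' : a ≤ ℓ)
    (hb : s ≤ b) (hb' : b ≤ ℓ) :
    updateRule a b = ℓ ↔ (a = ℓ - 1 ∨ a = ℓ) ∧ b = ℓ := by
  unfold updateRule; split_ifs <;> omega

lemma update_mem {s ℓ a b : ℤ} (ha : s ≤ a) (ha' : a ≤ ℓ) (hb : s ≤ b) (hb' : b ≤ ℓ) :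
    s ≤ updateRule a b ∧ updateRule a b ≤ ℓ := by
  unfold updateRule; split_ifs <;> omega

lemma prod_two_point {n : ℕ} {v w : Fin n} (hvw : v ≠ w) (F : Fin n → ℕ) :
    ∏ i, F i = F v * F w * ∏ i ∈ (Finset.univ.erase v).erase w, F i := by
  rw [← Finset.mul_prod_erase Finset.univ F (Finset.mem_univ v),
      ← Finset.mul_prod_erase _ F (Finset.mem_erase.mpr ⟨hvw.symm, Finset.mem_univ w⟩),
      mul_assoc]

lemma card_rest {n : ℕ} {v w : Fin n} (hvw : v ≠ w) :
    ((Finset.univ.erase v).erase w).card = n - 2 := by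
  rw [Finset.card_erase_of_mem (Finset.mem_erase.mpr ⟨hvw.symm, Finset.mem_univ w⟩),
      Finset.card_erase_of_mem (Finset.mem_univ v), Finset.card_univ, Fintype.card_fin]
  omega

lemma sum_two_point {n : ℕ} {v w : Fin n} (hvw : v ≠ w) (σ τ : Fin n → ℕ) :
    ∑ c : Fin n → Fin n, σ (c v) * τ (c w)
      = (∑ u, σ u) * (∑ u, τ u) * n ^ (n - 2) := by
  classical
  set h : Fin n → Fin n → ℕ := fun i u => if i = v then σ u else if i = w then τ u else 1 with hh
  have key : ∀ c : Fin n → Fin n, σ (c v) * τ (c w) = ∏ i, h i (c i) := by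
    intro c
    rw [prod_two_point hvw (fun i => h i (c i))]
    have h1 : ∏ i ∈ (Finset.univ.erase v).erase w, h i (c i) = 1 := by
      apply Finset.prod_eq_one
      intro i hi
      rw [Finset.mem_erase, Finset.mem_erase] at hi
      simp [hh, hi.1, hi.2.1]
    rw [h1, mul_one]
    simp [hh, hvw.symm]
  simp_rw [key]
  rw [← Fintype.piFinset_univ, ← Finset.prod_univ_sum]
  have h2 : ∏ i ∈ (Finset.univ.erase v).erase w, (∑ u, h i u) = n ^ (n - 2) := by
    rw [Finset.prod_congr rfl (fun i hi => ?_), Finset.prod_const, card_rest hvw]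
    · rw [Finset.mem_erase, Finset.mem_erase] at hi
      simp [hh, hi.1, hi.2.1]
  rw [prod_two_point hvw (fun i => ∑ u, h i u), h2]
  simp [hh, hvw.symm]








lemma count_update_s {n : ℕ} {s ℓ : ℤ} (h3 : s + 3 ≤ ℓ) {x : Fin n → ℤ}
    (hx : ∀ v, s ≤ x v ∧ x v ≤ ℓ) (c : Fin n → Fin n) :
    count n s (fun v => updateRule (x v) (x (c v)))
      = ∑ v, (if x v = s ∨ x v = s + 1 then 1 else 0) * (if x (c v) = s then 1 else 0) := by
  classical
  rw [count, Finset.card_filter]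
  apply Finset.sum_congr rfl
  intro v _
  simp only [update_eq_min h3 (hx v).1 (hx v).2 (hx (c v)).1 (hx (c v)).2]
  by_cases h1 : (x v = s ∨ x v = s + 1) <;> by_cases h2 : x (c v) = s <;> simp [h1, h2]

lemma count_update_l {n : ℕ} {s ℓ : ℤ} (h3 : s + 3 ≤ ℓ) {x : Fin n → ℤ}
    (hx : ∀ v, s ≤ x v ∧ x v ≤ ℓ) (c : Fin n → Fin n) :
    count n ℓ (fun v => updateRule (x v) (x (c v)))
      = ∑ v, (if x v = ℓ - 1 ∨ x v = ℓ then 1 else 0) * (if x (c v) = ℓ then 1 else 0) := by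
  classical
  rw [count, Finset.card_filter]
  apply Finset.sum_congr rfl
  intro v _
  simp only [update_eq_max h3 (hx v).1 (hx v).2 (hx (c v)).1 (hx (c v)).2]
  by_cases h1 : (x v = ℓ - 1 ∨ x v = ℓ) <;> by_cases h2 : x (c v) = ℓ <;> simp [h1, h2]

lemma comb {n : ℕ} {s ℓ : ℤ} (h3 : s + 3 ≤ ℓ) {x : Fin n → ℤ}
    (hx : ∀ v, s ≤ x v ∧ x v ≤ ℓ) :
    ∑ c : Fin n → Fin n,
        count n s (fun v => updateRule (x v) (x (c v))) *
        count n ℓ (fun v => updateRule (x v) (x (c v)))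
      ≤ n ^ (n - 2) * (count n s x * count n ℓ x) *
          ((Finset.univ.filter fun v => x v = s ∨ x v = s + 1).card *
           (Finset.univ.filter fun v => x v = ℓ - 1 ∨ x v = ℓ).card) := by
  classical
  set α : Fin n → ℕ := fun v => if x v = s ∨ x v = s + 1 then 1 else 0 with hα
  set β : Fin n → ℕ := fun v => if x v = ℓ - 1 ∨ x v = ℓ then 1 else 0 with hβ
  set σ : Fin n → ℕ := fun u => if x u = s then 1 else 0 with hσ'
  set τ : Fin n → ℕ := fun u => if x u = ℓ then 1 else 0 with hτ'
  have hσ : ∑ u, σ u = count n s x := (Finset.card_filter _ _).symm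
  have hτ : ∑ u, τ u = count n ℓ x := (Finset.card_filter _ _).symm
  have hA : ∑ v, α v = (Finset.univ.filter fun v => x v = s ∨ x v = s + 1).card :=
    (Finset.card_filter _ _).symm
  have hB : ∑ v, β v = (Finset.univ.filter fun v => x v = ℓ - 1 ∨ x v = ℓ).card :=
    (Finset.card_filter _ _).symm
  have hστ : ∀ u, σ u * τ u = 0 := by
    intro u
    by_cases h : x u = s
    · have : ¬ x u = ℓ := by omega
      simp [hσ', hτ', this]
    · simp [hσ', h]
  calc ∑ c : Fin n → Fin n,
        count n s (fun v => updateRule (x v) (x (c v))) *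
        count n ℓ (fun v => updateRule (x v) (x (c v)))
      = ∑ c : Fin n → Fin n, (∑ v, α v * σ (c v)) * (∑ w, β w * τ (c w)) := by
        apply Finset.sum_congr rfl
        intro c _
        rw [count_update_s h3 hx c, count_update_l h3 hx c]
    _ = ∑ c : Fin n → Fin n, ∑ v, ∑ w, (α v * σ (c v)) * (β w * τ (c w)) := by
        apply Finset.sum_congr rfl
        intro c _
        rw [Finset.sum_mul_sum]
    _ = ∑ v, ∑ w, ∑ c : Fin n → Fin n, (α v * σ (c v)) * (β w * τ (c w)) := by
        rw [Finset.sum_comm]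
        apply Finset.sum_congr rfl
        intro v _
        rw [Finset.sum_comm]
    _ ≤ ∑ v, ∑ w, n ^ (n - 2) * (count n s x * count n ℓ x) * (α v * β w) := by
        apply Finset.sum_le_sum
        intro v _
        apply Finset.sum_le_sum
        intro w _
        by_cases hvw : v = w
        · subst hvw
          have : ∀ c : Fin n → Fin n, (α v * σ (c v)) * (β v * τ (c v)) = 0 := by
            intro c
            have := hστ (c v)
            calc (α v * σ (c v)) * (β v * τ (c v))
                = (α v * β v) * (σ (c v) * τ (c v)) := by ring
              _ = 0 := by rw [this, mul_zero]
          rw [Finset.sum_congr rfl fun c _ => this c, Finset.sum_const, smul_zero]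
          exact Nat.zero_le _
        · apply le_of_eq
          have : ∀ c : Fin n → Fin n, (α v * σ (c v)) * (β w * τ (c w))
              = (α v * β w) * (σ (c v) * τ (c w)) := fun c => by ring
          rw [Finset.sum_congr rfl fun c _ => this c, ← Finset.mul_sum,
              sum_two_point hvw σ τ, hσ, hτ]
          ring
    _ = n ^ (n - 2) * (count n s x * count n ℓ x) *
          ((Finset.univ.filter fun v => x v = s ∨ x v = s + 1).card *
           (Finset.univ.filter fun v => x v = ℓ - 1 ∨ x v = ℓ).card) := by
        rw [← hA, ← hB, Finset.sum_mul_sum]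
        simp only [Finset.mul_sum]








lemma pow_helper (n : ℕ) : n ^ (n - 2) * n ^ 2 ≤ n ^ n := by
  match n with
  | 0 => simp
  | 1 => simp
  | (k + 2) => rw [← pow_add]; simp

lemma filter_cards {n : ℕ} {s ℓ : ℤ} (h3 : s + 3 ≤ ℓ) (x : Fin n → ℤ) :
    4 * ((Finset.univ.filter fun v => x v = s ∨ x v = s + 1).card *
         (Finset.univ.filter fun v => x v = ℓ - 1 ∨ x v = ℓ).card) ≤ n ^ 2 := by
  classical
  set A := Finset.univ.filter fun v : Fin n => x v = s ∨ x v = s + 1 with hA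
  set B := Finset.univ.filter fun v : Fin n => x v = ℓ - 1 ∨ x v = ℓ with hB
  have hd : Disjoint A B := by
    rw [Finset.disjoint_left]
    intro a ha hb
    rw [hA, Finset.mem_filter] at ha
    rw [hB, Finset.mem_filter] at hb
    omega
  have hcard : A.card + B.card ≤ n := by
    rw [← Finset.card_union_of_disjoint hd]
    calc (A ∪ B).card ≤ (Finset.univ : Finset (Fin n)).card := Finset.card_le_card (Finset.subset_univ _)
      _ = n := by simp
  have h4ab : 4 * (A.card * B.card) ≤ (A.card + B.card) ^ 2 := by
    zify
    nlinarith [sq_nonneg ((A.card : ℤ) - B.card)]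
  calc 4 * (A.card * B.card) ≤ (A.card + B.card) ^ 2 := h4ab
    _ ≤ n ^ 2 := Nat.pow_le_pow_left hcard 2

lemma step_bound (n : ℕ) [NeZero n] {s ℓ : ℤ} (h3 : s + 3 ≤ ℓ) {x : Fin n → ℤ}
    (hx : ∀ v, s ≤ x v ∧ x v ≤ ℓ) :
    ∑' y, step n x y * ((count n s y * count n ℓ y : ℕ) : ℝ≥0∞)
      ≤ 4⁻¹ * ((count n s x * count n ℓ x : ℕ) : ℝ≥0∞) := by
  classical
  rw [step, eE_map, tsum_fintype]
  simp only [PMF.uniformOfFintype_apply, Fintype.card_fun, Fintype.card_fin]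
  rw [← Finset.mul_sum, ← Nat.cast_sum, Nat.cast_pow]
  -- now: (↑(n^n))⁻¹ * ↑(∑ c, count * count) ≤ 4⁻¹ * ↑(count * count)
  set S : ℕ := ∑ c : Fin n → Fin n,
      count n s (fun v => updateRule (x v) (x (c v))) *
      count n ℓ (fun v => updateRule (x v) (x (c v))) with hS
  set NN : ℕ := count n s x * count n ℓ x with hNN
  have hnat : S * 4 ≤ n ^ n * NN := by
    calc S * 4 ≤ (n ^ (n - 2) * NN *
          ((Finset.univ.filter fun v => x v = s ∨ x v = s + 1).card *
           (Finset.univ.filter fun v => x v = ℓ - 1 ∨ x v = ℓ).card)) * 4 :=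
          Nat.mul_le_mul_right 4 (comb h3 hx)
      _ = n ^ (n - 2) * (4 * ((Finset.univ.filter fun v => x v = s ∨ x v = s + 1).card *
           (Finset.univ.filter fun v => x v = ℓ - 1 ∨ x v = ℓ).card)) * NN := by ring
      _ ≤ n ^ (n - 2) * n ^ 2 * NN := by
          have := filter_cards h3 x
          exact Nat.mul_le_mul_right NN (Nat.mul_le_mul_left _ this)
      _ ≤ n ^ n * NN := Nat.mul_le_mul_right NN (pow_helper n)
  have hcast : (S : ℝ≥0∞) * 4 ≤ (n : ℝ≥0∞) ^ n * (NN : ℝ≥0∞) := by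
    have := (Nat.cast_le (α := ℝ≥0∞)).mpr hnat
    push_cast at this
    convert this using 2 <;> push_cast <;> ring
  have h4 : (4 : ℝ≥0∞)⁻¹ * 4 = 1 := ENNReal.inv_mul_cancel (by norm_num) (by norm_num)
  have hnn0 : ((n : ℝ≥0∞) ^ n) ≠ 0 := pow_ne_zero _ (Nat.cast_ne_zero.mpr (NeZero.ne n))
  have hnnt : ((n : ℝ≥0∞) ^ n) ≠ ⊤ := ENNReal.pow_ne_top (ENNReal.natCast_ne_top n)
  have hn : ((n : ℝ≥0∞) ^ n)⁻¹ * ((n : ℝ≥0∞) ^ n) = 1 := ENNReal.inv_mul_cancel hnn0 hnnt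
  calc (((n:ℝ≥0∞)) ^ n)⁻¹ * (S : ℝ≥0∞)
      = ((n:ℝ≥0∞) ^ n)⁻¹ * S * (4⁻¹ * 4) := by rw [h4, mul_one]
    _ = 4⁻¹ * (((n:ℝ≥0∞) ^ n)⁻¹ * (S * 4)) := by ring
    _ ≤ 4⁻¹ * (((n:ℝ≥0∞) ^ n)⁻¹ * ((n:ℝ≥0∞) ^ n * NN)) := by gcongr
    _ = 4⁻¹ * (NN : ℝ≥0∞) * (((n:ℝ≥0∞) ^ n)⁻¹ * ((n:ℝ≥0∞) ^ n)) := by ring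
    _ = 4⁻¹ * (NN : ℝ≥0∞) := by rw [hn, mul_one]













lemma expVal_nat_eq {α : Type*} (p : PMF α) (g : α → ℕ) :
    expVal p (fun a => (g a : ℝ)) = (∑' a, p a * (g a : ℝ≥0∞)).toReal := by
  rw [expVal, ENNReal.tsum_toReal_eq]
  · apply tsum_congr
    intro a
    rw [ENNReal.toReal_mul]
    simp
  · intro a
    exact ENNReal.mul_ne_top (PMF.apply_ne_top p a) (ENNReal.natCast_ne_top _)

lemma count_le (n : ℕ) (i : ℤ) (x : Fin n → ℤ) : count n i x ≤ n := by
  calc count n i x ≤ (Finset.univ : Finset (Fin n)).card := Finset.card_filter_le _ _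
    _ = n := by simp

-- support lemma
lemma dist_support (n : ℕ) [NeZero n] (x0 : Fin n → ℤ) (s ℓ : ℤ)
    (hs : IsLeast (Set.range x0) s) (hℓ : IsGreatest (Set.range x0) ℓ) (t : ℕ) :
    ∀ y ∈ (dist n x0 t).support, ∀ v, s ≤ y v ∧ y v ≤ ℓ := by
  induction t with
  | zero =>
    intro y hy v
    rw [dist, PMF.support_pure, Set.mem_singleton_iff] at hy
    subst hy
    exact ⟨hs.2 ⟨v, rfl⟩, hℓ.2 ⟨v, rfl⟩⟩
  | succ t ih =>
    intro y hy v
    rw [dist, PMF.support_bind] at hy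
    obtain ⟨x, hx, hy⟩ := Set.mem_iUnion₂.mp hy
    rw [step, PMF.support_map] at hy
    obtain ⟨c, _, rfl⟩ := hy
    exact update_mem (ih x hx v).1 (ih x hx v).2 (ih x hx (c v)).1 (ih x hx (c v)).2

lemma eE_dist_le (n : ℕ) [NeZero n] (x0 : Fin n → ℤ) (s ℓ : ℤ)
    (hs : IsLeast (Set.range x0) s) (hℓ : IsGreatest (Set.range x0) ℓ)
    (h3 : s + 3 ≤ ℓ) (t : ℕ) :
    ∑' y, dist n x0 t y * ((count n s y * count n ℓ y : ℕ) : ℝ≥0∞)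
      ≤ 4⁻¹ ^ t * ((count n s x0 * count n ℓ x0 : ℕ) : ℝ≥0∞) := by
  induction t with
  | zero => rw [dist, eE_pure]; simp
  | succ t ih =>
    rw [dist, eE_bind]
    calc ∑' x, dist n x0 t x * ∑' y, step n x y * ((count n s y * count n ℓ y : ℕ) : ℝ≥0∞)
        ≤ ∑' x, dist n x0 t x * (4⁻¹ * ((count n s x * count n ℓ x : ℕ) : ℝ≥0∞)) := by
          apply ENNReal.tsum_le_tsum
          intro x
          by_cases hx : dist n x0 t x = 0
          · rw [hx]; simp
          · exact mul_le_mul_right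
              (step_bound n h3 (dist_support n x0 s ℓ hs hℓ t x hx)) _
      _ = 4⁻¹ * ∑' x, dist n x0 t x * ((count n s x * count n ℓ x : ℕ) : ℝ≥0∞) := by
          rw [← ENNReal.tsum_mul_left]
          apply tsum_congr
          intro x
          ring
      _ ≤ 4⁻¹ * (4⁻¹ ^ t * ((count n s x0 * count n ℓ x0 : ℕ) : ℝ≥0∞)) :=
          mul_le_mul_right ih _
      _ = 4⁻¹ ^ (t + 1) * ((count n s x0 * count n ℓ x0 : ℕ) : ℝ≥0∞) := by
          rw [pow_succ]
          ring

lemma log4 : (1 : ℝ) ≤ Real.log 4 := by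
  rw [Real.le_log_iff_exp_le (by norm_num)]
  have := Real.exp_one_lt_d9
  linarith

lemma numeric (n : ℕ) (hn : 1 ≤ n) :
    ((n : ℝ) ^ 2) * n ≤ 4 ^ (⌈3 * Real.log n⌉₊ : ℕ) := by
  set T : ℕ := ⌈3 * Real.log n⌉₊ with hT
  have hn0 : (0 : ℝ) < n := by exact_mod_cast hn
  have h1 : (n : ℝ) ^ 2 * n = Real.exp (3 * Real.log n) := by
    rw [← Real.exp_log (by positivity : (0:ℝ) < (n:ℝ)^2 * n)]
    congr 1
    rw [show (n:ℝ)^2 * (n:ℝ) = (n:ℝ)^3 by ring, Real.log_pow]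
    push_cast
    ring
  have h2 : (4 : ℝ) ^ T = Real.exp (T * Real.log 4) := by
    rw [← Real.exp_log (by positivity : (0:ℝ) < 4 ^ T), Real.log_pow]
  rw [h1, h2]
  apply Real.exp_le_exp.mpr
  calc 3 * Real.log n ≤ (T : ℝ) := Nat.le_ceil _
    _ = T * 1 := by ring
    _ ≤ T * Real.log 4 := by
        apply mul_le_mul_of_nonneg_left log4 (by positivity)

theorem part2 (n : ℕ) [NeZero n] (x0 : Fin n → ℤ) (s ℓ : ℤ)
    (hs : IsLeast (Set.range x0) s) (hℓ : IsGreatest (Set.range x0) ℓ)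
    (h3 : s + 3 ≤ ℓ) :
    prob (dist n x0 ⌈3 * Real.log n⌉₊) {y | 0 < count n s y * count n ℓ y} ≤ 1 / n := by
  classical
  set T : ℕ := ⌈3 * Real.log n⌉₊ with hT
  set A : Set (Fin n → ℤ) := {y | 0 < count n s y * count n ℓ y} with hA
  have hmarkov : ∑' y, A.indicator (dist n x0 T) y
      ≤ ∑' y, dist n x0 T y * ((count n s y * count n ℓ y : ℕ) : ℝ≥0∞) := by
    apply ENNReal.tsum_le_tsum
    intro y
    by_cases hy : y ∈ A
    · rw [Set.indicator_of_mem hy]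
      have h1 : (1 : ℝ≥0∞) ≤ ((count n s y * count n ℓ y : ℕ) : ℝ≥0∞) := by
        rw [hA, Set.mem_setOf_eq] at hy
        exact_mod_cast Nat.one_le_cast.mpr hy
      calc dist n x0 T y = dist n x0 T y * 1 := (mul_one _).symm
        _ ≤ _ := mul_le_mul_right h1 _
    · rw [Set.indicator_of_notMem hy]; exact zero_le
  have hbound : ∑' y, dist n x0 T y * ((count n s y * count n ℓ y : ℕ) : ℝ≥0∞)
      ≤ 4⁻¹ ^ T * ((n ^ 2 : ℕ) : ℝ≥0∞) := by
    calc _ ≤ 4⁻¹ ^ T * ((count n s x0 * count n ℓ x0 : ℕ) : ℝ≥0∞) :=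
          eE_dist_le n x0 s ℓ hs hℓ h3 T
      _ ≤ 4⁻¹ ^ T * ((n ^ 2 : ℕ) : ℝ≥0∞) := by
          apply mul_le_mul_right
          apply Nat.cast_le.mpr
          calc count n s x0 * count n ℓ x0 ≤ n * n :=
                Nat.mul_le_mul (count_le n s x0) (count_le n ℓ x0)
            _ = n ^ 2 := (sq n).symm
  have hne : (4 : ℝ≥0∞)⁻¹ ^ T * ((n ^ 2 : ℕ) : ℝ≥0∞) ≠ ⊤ :=
    ENNReal.mul_ne_top (ENNReal.pow_ne_top (by simp)) (ENNReal.natCast_ne_top _)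
  have := ENNReal.toReal_mono hne (hmarkov.trans hbound)
  rw [prob]
  refine this.trans ?_
  have htor : ((4 : ℝ≥0∞)⁻¹ ^ T * ((n ^ 2 : ℕ) : ℝ≥0∞)).toReal = (4 : ℝ)⁻¹ ^ T * (n : ℝ) ^ 2 := by
    rw [ENNReal.toReal_mul, ENNReal.toReal_pow, ENNReal.toReal_inv]
    push_cast
    norm_num
  rw [htor]
  have hn1 : 1 ≤ n := Nat.one_le_iff_ne_zero.mpr (NeZero.ne n)
  have hn0 : (0 : ℝ) < n := by exact_mod_cast hn1
  have hnum := numeric n hn1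
  rw [inv_pow]
  have key : (n:ℝ) ^ 2 ≤ 4 ^ T / n := (le_div_iff₀ hn0).mpr hnum
  calc ((4:ℝ) ^ T)⁻¹ * (n:ℝ) ^ 2 ≤ ((4:ℝ) ^ T)⁻¹ * (4 ^ T / n) := by gcongr
    _ = 1 / n := by
        field_simp


/-- **Elimination of an extreme opinion for synchronous incremental voting on `K_n`**:
if `ℓ ≥ s + 3`, then `E[N_s(t+1)·N_ℓ(t+1) | X(t)] ≤ (1/4)·N_s(t)·N_ℓ(t)`, and for
`T = ⌈3 log n⌉` we have `P[N_s(T)·N_ℓ(T) > 0] ≤ 1/n`. -/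
theorem extreme_opinion_elimination
    (n : ℕ) [NeZero n] (x0 : Fin n → ℤ) (s ℓ : ℤ)
    (hs : IsLeast (Set.range x0) s) (hℓ : IsGreatest (Set.range x0) ℓ)
    (h3 : s + 3 ≤ ℓ) :
    (∀ x : Fin n → ℤ, (∀ v, s ≤ x v ∧ x v ≤ ℓ) →
      expVal (step n x) (fun y => (count n s y : ℝ) * (count n ℓ y : ℝ)) ≤
        (1 / 4) * ((count n s x : ℝ) * (count n ℓ x : ℝ))) ∧
    prob (dist n x0 ⌈3 * Real.log n⌉₊) {y | 0 < count n s y * count n ℓ y} ≤ 1 / n := by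
  constructor
  · intro x hx
    have hfun : (fun y => (count n s y : ℝ) * (count n ℓ y : ℝ))
        = fun y => ((count n s y * count n ℓ y : ℕ) : ℝ) := by
      funext y; push_cast; ring
    rw [hfun, expVal_nat_eq]
    have hne : (4 : ℝ≥0∞)⁻¹ * ((count n s x * count n ℓ x : ℕ) : ℝ≥0∞) ≠ ⊤ :=
      ENNReal.mul_ne_top (by simp) (ENNReal.natCast_ne_top _)
    refine (ENNReal.toReal_mono hne (step_bound n h3 hx)).trans ?_
    rw [ENNReal.toReal_mul, ENNReal.toReal_inv]
    push_cast
    norm_num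
  · exact part2 n x0 s ℓ hs hℓ h3

end KnSync8
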